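/- Any code C ⊆ F₂^{n×L} of size M with minimum ρ_TE-distance d satisfies the Singleton-type bound d ≤ nL - ⌈log₂ M⌉ + 1. -/

import Mathlib

/-- Row-wise tail-erasure distance: 0 if rows equal, else `L - (least differing index)`,
which equals `L - min{i : x_i ≠ y_i} + 1` in 1-indexed notation. -/
def rhoRow {L : ℕ} (x y : Fin L → ZMod 2) : ℕ :=
  if h : x = y then 0
  else
    L - (Finset.univ.filter (fun j => x j ≠ y j)).min' (by
      obtain ⟨j, hj⟩ := Function.ne_iff.mp h
      exact ⟨j, Finset.mem_filter.mpr ⟨Finset.mem_univ j, hj⟩⟩)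

/-- The tail-erasure distance on binary `n × L` arrays: sum of row distances. -/
def rhoTE {n L : ℕ} (X Y : Fin n → Fin L → ZMod 2) : ℕ :=
  ∑ i, rhoRow (X i) (Y i)

lemma rhoRow_eq {L : ℕ} (x y : Fin L → ZMod 2) (h : x ≠ y)
    (hne : (Finset.univ.filter (fun j => x j ≠ y j)).Nonempty) :
    rhoRow x y = L - (Finset.univ.filter (fun j => x j ≠ y j)).min' hne := by
  rw [rhoRow, dif_neg h]

lemma rhoRow_le {L : ℕ} (x y : Fin L → ZMod 2) : rhoRow x y ≤ L := by
  by_cases h : x = y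
  · simp [rhoRow, h]
  · have hne : (Finset.univ.filter (fun j => x j ≠ y j)).Nonempty := by
      obtain ⟨j, hj⟩ := Function.ne_iff.mp h
      exact ⟨j, Finset.mem_filter.mpr ⟨Finset.mem_univ j, hj⟩⟩
    rw [rhoRow_eq x y h hne]; omega

lemma rhoRow_add_le {L c : ℕ} (x y : Fin L → ZMod 2)
    (h : ∀ i : Fin L, (i : ℕ) < c → x i = y i) :
    rhoRow x y + min L c ≤ L := by
  by_cases hxy : x = y
  · simp [rhoRow, hxy]
  · have hne : (Finset.univ.filter (fun j => x j ≠ y j)).Nonempty := by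
      obtain ⟨j, hj⟩ := Function.ne_iff.mp hxy
      exact ⟨j, Finset.mem_filter.mpr ⟨Finset.mem_univ j, hj⟩⟩
    rw [rhoRow_eq x y hxy hne]
    set m := (Finset.univ.filter (fun j => x j ≠ y j)).min' hne with hm
    have hmem := Finset.min'_mem _ hne
    rw [← hm] at hmem
    have hxym : x m ≠ y m := (Finset.mem_filter.mp hmem).2
    have hc : c ≤ (m : ℕ) := by
      by_contra hlt
      exact hxym (h m (by omega))
    have hmL : (m : ℕ) < L := m.isLt
    omega

lemma sum_min_ge (L : ℕ) : ∀ (n c : ℕ), c ≤ n * L → c ≤ ∑ j : Fin n, min L (c - (j : ℕ) * L) := by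
  intro n
  induction n with
  | zero => intro c hc; simpa using hc
  | succ n ih =>
    intro c hc
    rw [Fin.sum_univ_succ]
    have hrw : ∑ j : Fin n, min L (c - (↑(Fin.succ j) : ℕ) * L)
        = ∑ j : Fin n, min L ((c - L) - (j : ℕ) * L) := by
      apply Finset.sum_congr rfl
      intro j _
      congr 1
      have : ((Fin.succ j : Fin (n+1)) : ℕ) = (j : ℕ) + 1 := rfl
      rw [this, add_mul, one_mul]
      omega
    rw [hrw]
    have hnL : (n + 1) * L = n * L + L := by ring
    have hih := ih (c - L) (by omega)
    have h0 : ((0 : Fin (n+1)) : ℕ) = 0 := rfl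
    rw [h0]
    omega

lemma rhoTE_le {n L : ℕ} (X Y : Fin n → Fin L → ZMod 2) : rhoTE X Y ≤ n * L := by
  calc rhoTE X Y ≤ ∑ _i : Fin n, L := Finset.sum_le_sum (fun i _ => rhoRow_le _ _)
    _ = n * L := by simp [Finset.sum_const, Finset.card_univ, mul_comm]

/-- Singleton-type bound: a code of size `M ≥ 2` with minimum
ρ_TE-distance `d` satisfies `d ≤ nL - ⌈log₂ M⌉ + 1`. -/
theorem stmt_13 (n L : ℕ) (hn : 0 < n) (hL : 0 < L)
    (C : Finset (Fin n → Fin L → ZMod 2)) (hM : 2 ≤ C.card)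
    (d : ℕ) (hd : d = sInf {k : ℕ | ∃ X ∈ C, ∃ Y ∈ C, X ≠ Y ∧ rhoTE X Y = k}) :
    d ≤ n * L - Nat.clog 2 C.card + 1 := by
  obtain ⟨X0, hX0, Y0, hY0, hne0⟩ := Finset.one_lt_card.mp (by omega : 1 < C.card)
  have hdle : d ≤ rhoTE X0 Y0 := by
    rw [hd]
    exact Nat.sInf_le ⟨X0, hX0, Y0, hY0, hne0, rfl⟩
  have hdnL : d ≤ n * L := le_trans hdle (rhoTE_le X0 Y0)
  rcases Nat.eq_zero_or_pos d with h0 | hdpos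
  · omega
  · set t := d - 1 with ht
    set c := n * L - t with hc
    have hcle : c ≤ n * L := Nat.sub_le _ _
    -- the injection
    have hdivlt : ∀ m : Fin c, (m : ℕ) / L < n := fun m =>
      (Nat.div_lt_iff_lt_mul hL).mpr (lt_of_lt_of_le m.isLt hcle)
    set Ψ : (Fin n → Fin L → ZMod 2) → (Fin c → ZMod 2) :=
      fun Z m => Z ⟨(m : ℕ) / L, hdivlt m⟩ ⟨(m : ℕ) % L, Nat.mod_lt _ hL⟩ with hΨ
    have hinj : Set.InjOn Ψ C := by
      intro X hX Y hY hPsi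
      by_contra hXY
      have hagree : ∀ (j : Fin n) (i : Fin L), (j : ℕ) * L + (i : ℕ) < c → X j i = Y j i := by
        intro j i hlt
        have hdiv : ((j : ℕ) * L + (i : ℕ)) / L = (j : ℕ) := by
          rw [add_comm, Nat.add_mul_div_right _ _ hL, Nat.div_eq_of_lt i.isLt]; omega
        have hmod : ((j : ℕ) * L + (i : ℕ)) % L = (i : ℕ) := by
          rw [add_comm, Nat.add_mul_mod_self_right, Nat.mod_eq_of_lt i.isLt]
        have hcf := congrFun hPsi ⟨(j : ℕ) * L + (i : ℕ), hlt⟩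
        simp only [hΨ] at hcf
        have e1 : (⟨((⟨(j : ℕ) * L + (i : ℕ), hlt⟩ : Fin c) : ℕ) / L, hdivlt _⟩ : Fin n) = j :=
          Fin.ext hdiv
        have e2 : (⟨((⟨(j : ℕ) * L + (i : ℕ), hlt⟩ : Fin c) : ℕ) % L,
            Nat.mod_lt _ hL⟩ : Fin L) = i := Fin.ext hmod
        rw [e1, e2] at hcf
        exact hcf
      have hper : ∀ j : Fin n, rhoRow (X j) (Y j) + min L (c - (j : ℕ) * L) ≤ L := by
        intro j
        apply rhoRow_add_le
        intro i hi
        apply hagree j i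
        have : ∀ a : ℕ, (i : ℕ) < c - a → a + (i : ℕ) < c := fun a h => by omega
        have h2 := this ((j : ℕ) * L) hi
        omega
      have hsum : rhoTE X Y + c ≤ n * L := by
        have h1 : c ≤ ∑ j : Fin n, min L (c - (j : ℕ) * L) := sum_min_ge L n c hcle
        have h2 : rhoTE X Y + ∑ j : Fin n, min L (c - (j : ℕ) * L)
            = ∑ j : Fin n, (rhoRow (X j) (Y j) + min L (c - (j : ℕ) * L)) := by
          rw [rhoTE, ← Finset.sum_add_distrib]
        have h3 : ∑ j : Fin n, (rhoRow (X j) (Y j) + min L (c - (j : ℕ) * L))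
            ≤ ∑ _j : Fin n, L := Finset.sum_le_sum (fun j _ => hper j)
        have h4 : ∑ _j : Fin n, L = n * L := by
          simp [Finset.sum_const, Finset.card_univ, mul_comm]
        omega
      have hge : d ≤ rhoTE X Y := by
        rw [hd]
        exact Nat.sInf_le ⟨X, hX, Y, hY, hXY, rfl⟩
      omega
    have hcard : C.card ≤ 2 ^ c := by
      calc C.card ≤ (Finset.univ : Finset (Fin c → ZMod 2)).card :=
            Finset.card_le_card_of_injOn Ψ (fun a _ => Finset.mem_univ _) hinj
        _ = 2 ^ c := by
            rw [Finset.card_univ]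
            simp [Fintype.card_fun]
    have hclog : Nat.clog 2 C.card ≤ c := (Nat.clog_le_iff_le_pow (by norm_num)).mpr hcard
    omega
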